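/- Let m > 0. If f solves f''' + ((m+1)/2) f f'' - m (f')² = 0 on [0,∞) with f'(0) = -1 and f'(t) → 0 as t → ∞, then f(t) > 0 for all t ≥ 0 and f is (weakly) decreasing on [0,∞); in particular f(0) > 0. -/

import Mathlib

open Real Set Filter Topology

lemma aux_slope_right {g : ℝ → ℝ} {d c : ℝ} (h : HasDerivAt g d c) (hd : 0 < d) :
    ∀ᶠ t in 𝓝[>] c, g c < g t := by
  rw [hasDerivAt_iff_tendsto_slope] at h
  have h1 : ∀ᶠ t in 𝓝[≠] c, 0 < slope g c t := h.eventually (lt_mem_nhds hd)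
  have h2 : 𝓝[>] c ≤ 𝓝[≠] c := nhdsWithin_mono c (fun x hx => ne_of_gt hx)
  filter_upwards [h1.filter_mono h2, self_mem_nhdsWithin] with t hs (ht : t ∈ Ioi c)
  rw [slope_def_field, div_pos_iff] at hs
  rcases hs with ⟨h3, _⟩ | ⟨_, h4⟩
  · linarith
  · exfalso; simp only [mem_Ioi] at ht; linarith

lemma aux_slope_left {g : ℝ → ℝ} {d c : ℝ} (h : HasDerivAt g d c) (hd : 0 < d) :
    ∀ᶠ t in 𝓝[<] c, g t < g c := by
  rw [hasDerivAt_iff_tendsto_slope] at h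
  have h1 : ∀ᶠ t in 𝓝[≠] c, 0 < slope g c t := h.eventually (lt_mem_nhds hd)
  have h2 : 𝓝[<] c ≤ 𝓝[≠] c := nhdsWithin_mono c (fun x hx => ne_of_lt hx)
  filter_upwards [h1.filter_mono h2, self_mem_nhdsWithin] with t hs (ht : t ∈ Iio c)
  rw [slope_def_field, div_pos_iff] at hs
  rcases hs with ⟨_, h3⟩ | ⟨h4, _⟩
  · exfalso; simp only [mem_Iio] at ht; linarith
  · linarith

set_option maxHeartbeats 2000000 in
theorem stmt5 (m : ℝ) (hm : 0 < m) (f f' f'' f''' : ℝ → ℝ)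
    (hf : ∀ t ∈ Set.Ici (0:ℝ), HasDerivWithinAt f (f' t) (Set.Ici 0) t)
    (hf' : ∀ t ∈ Set.Ici (0:ℝ), HasDerivWithinAt f' (f'' t) (Set.Ici 0) t)
    (hf'' : ∀ t ∈ Set.Ici (0:ℝ), HasDerivWithinAt f'' (f''' t) (Set.Ici 0) t)
    (hode : ∀ t ∈ Set.Ici (0:ℝ),
      f''' t + (m + 1) / 2 * f t * f'' t - m * (f' t) ^ 2 = 0)
    (h0 : f' 0 = -1)
    (hlim : Filter.Tendsto f' Filter.atTop (nhds 0)) :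
    (∀ t : ℝ, 0 ≤ t → 0 < f t) ∧ AntitoneOn f (Set.Ici 0) ∧ 0 < f 0 := by
  have hfc : ContinuousOn f (Ici 0) := fun t ht => (hf t ht).continuousWithinAt
  have hf'c : ContinuousOn f' (Ici 0) := fun t ht => (hf' t ht).continuousWithinAt
  have hf''c : ContinuousOn f'' (Ici 0) := fun t ht => (hf'' t ht).continuousWithinAt
  have Hf : ∀ {t : ℝ}, 0 < t → HasDerivAt f (f' t) t :=
    fun {t} ht => (hf t ht.le).hasDerivAt (Ici_mem_nhds ht)
  have Hf' : ∀ {t : ℝ}, 0 < t → HasDerivAt f' (f'' t) t :=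
    fun {t} ht => (hf' t ht.le).hasDerivAt (Ici_mem_nhds ht)
  have Hf'' : ∀ {t : ℝ}, 0 < t → HasDerivAt f'' (f''' t) t :=
    fun {t} ht => (hf'' t ht.le).hasDerivAt (Ici_mem_nhds ht)
  have hODE : ∀ t : ℝ, 0 ≤ t → f''' t = m * (f' t) ^ 2 - (m + 1) / 2 * f t * f'' t := by
    intro t ht; have := hode t ht; linarith
  -- Step B : f' ≤ 0 everywhere
  have hneg : ∀ t : ℝ, 0 ≤ t → f' t ≤ 0 := by
    by_contra hcon
    push_neg at hcon
    obtain ⟨a, ha0, hfa⟩ := hcon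
    obtain ⟨T₀, hT₀⟩ := (hlim.eventually (Iio_mem_nhds hfa)).exists_forall_of_atTop
    set T : ℝ := max a T₀ with hT
    have haT : a ≤ T := le_max_left _ _
    have hT0 : (0:ℝ) ≤ T := le_trans ha0 haT
    obtain ⟨c, hcmem, hcmax⟩ := isCompact_Icc.exists_isMaxOn (⟨0, le_refl 0, hT0⟩ : (Icc (0:ℝ) T).Nonempty)
      (hf'c.mono (fun x hx => hx.1))
    have hglob : ∀ t : ℝ, 0 ≤ t → f' t ≤ f' c := by
      intro t ht
      rcases le_or_gt t T with h | h
      · exact hcmax ⟨ht, h⟩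
      · have h1 : f' t < f' a := hT₀ t (le_trans (le_max_right _ _) h.le)
        exact le_trans h1.le (hcmax ⟨ha0, haT⟩)
    have hfc_pos : 0 < f' c := lt_of_lt_of_le hfa (hcmax ⟨ha0, haT⟩)
    have hc_pos : 0 < c := by
      rcases hcmem.1.lt_or_eq with h | h
      · exact h
      · exfalso; rw [← h, h0] at hfc_pos; linarith
    have hlm : IsLocalMax f' c :=
      Filter.eventually_of_mem (Ici_mem_nhds hc_pos) (fun t (ht : t ∈ Ici (0:ℝ)) => hglob t ht)
    have hc2 : f'' c = 0 := hlm.hasDerivAt_eq_zero (Hf' hc_pos)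
    have hc3 : 0 < f''' c := by
      rw [hODE c hc_pos.le, hc2]
      have : 0 < (f' c) ^ 2 := by positivity
      nlinarith
    have hev : ∀ᶠ t in 𝓝[>] c, f'' c < f'' t := aux_slope_right (Hf'' hc_pos) hc3
    obtain ⟨u, (hu : c < u), hsub⟩ := mem_nhdsGT_iff_exists_Ioo_subset.1 hev
    set b : ℝ := (c + u) / 2 with hb
    have hcb : c < b := by rw [hb]; linarith
    have hbu : b < u := by rw [hb]; linarith
    have hmono : StrictMonoOn f' (Icc c b) := by
      apply strictMonoOn_of_deriv_pos (convex_Icc c b)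
        (hf'c.mono (fun x hx => le_trans hc_pos.le hx.1))
      intro x hx
      rw [interior_Icc] at hx
      have hx0 : 0 < x := lt_trans hc_pos hx.1
      rw [(Hf' hx0).deriv]
      have := hsub ⟨hx.1, lt_trans hx.2 hbu⟩
      rw [hc2] at this; exact this
    have h1 : f' c < f' b := hmono ⟨le_refl c, hcb.le⟩ ⟨hcb.le, le_refl b⟩ hcb
    have h2 : f' b ≤ f' c := hglob b (le_trans hc_pos.le hcb.le)
    linarith
  -- Step C : f' < 0 everywhere (backward uniqueness)
  have hneg' : ∀ t : ℝ, 0 ≤ t → f' t < 0 := by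
    intro t₁ ht₁
    rcases (hneg t₁ ht₁).lt_or_eq with h | hz
    · exact h
    exfalso
    have ht₁pos : 0 < t₁ := by
      rcases ht₁.lt_or_eq with h | h
      · exact h
      · exfalso; rw [← h] at hz; rw [h0] at hz; linarith
    have hlm : IsLocalMax f' t₁ :=
      Filter.eventually_of_mem (Ici_mem_nhds ht₁pos)
        (fun t (ht : t ∈ Ici (0:ℝ)) => by rw [hz]; exact hneg t ht)
    have hd2 : f'' t₁ = 0 := hlm.hasDerivAt_eq_zero (Hf' ht₁pos)
    obtain ⟨A, hA⟩ := (isCompact_Icc (a := (0:ℝ)) (b := t₁)).exists_bound_of_continuousOn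
      (hfc.mono (fun x hx => hx.1))
    obtain ⟨B, hB⟩ := (isCompact_Icc (a := (0:ℝ)) (b := t₁)).exists_bound_of_continuousOn
      (hf'c.mono (fun x hx => hx.1))
    have hA0 : 0 ≤ A := le_trans (norm_nonneg _) (hA 0 ⟨le_refl 0, ht₁⟩)
    have hB0 : 0 ≤ B := le_trans (norm_nonneg _) (hB 0 ⟨le_refl 0, ht₁⟩)
    set K : ℝ := 1 + m * B + (m + 1) / 2 * A with hK
    clear_value K
    have hK1 : 1 ≤ K := by rw [hK]; nlinarith
    -- the reversed pair (f', f'') vanishes backward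
    have key : ∀ u : ℝ, u ∈ Ioo 0 t₁ → f' u = 0 := by
      intro u hu
      set b : ℝ := t₁ - u with hbdef
      have hb0 : 0 < b := by rw [hbdef]; simp only [mem_Ioo] at hu; linarith
      have hbt : b < t₁ := by rw [hbdef]; simp only [mem_Ioo] at hu; linarith
      set y : ℝ → ℝ × ℝ := fun s => (f' (t₁ - s), f'' (t₁ - s)) with hy
      set y' : ℝ → ℝ × ℝ := fun s => (-f'' (t₁ - s), -f''' (t₁ - s)) with hy'
      have hyd : ∀ s ∈ Icc (0:ℝ) b, HasDerivAt y (y' s) s := by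
        intro s hs
        have hts : 0 < t₁ - s := by
          simp only [mem_Icc] at hs; linarith
        have hinner : HasDerivAt (fun s : ℝ => t₁ - s) (-1) s := by
          simpa using (hasDerivAt_id s).const_sub t₁
        have h1 : HasDerivAt (fun s : ℝ => f' (t₁ - s)) (-f'' (t₁ - s)) s := by
          have := (Hf' hts).comp s hinner
          simpa [mul_comm, Function.comp_def] using this
        have h2 : HasDerivAt (fun s : ℝ => f'' (t₁ - s)) (-f''' (t₁ - s)) s := by
          have := (Hf'' hts).comp s hinner
          simpa [mul_comm, Function.comp_def] using this
        exact h1.prodMk h2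
      have hcont : ContinuousOn y (Icc 0 b) :=
        fun s hs => (hyd s hs).continuousAt.continuousWithinAt
      have hbound : ∀ s ∈ Ico (0:ℝ) b, ‖y' s‖ ≤ K * ‖y s‖ + 0 := by
        intro s hs
        have hsmem : t₁ - s ∈ Icc (0:ℝ) t₁ := by
          simp only [mem_Ico] at hs
          constructor <;> [linarith; linarith]
        have hAs : |f (t₁ - s)| ≤ A := hA _ hsmem
        have hBs : |f' (t₁ - s)| ≤ B := hB _ hsmem
        have hys : ‖y s‖ = max |f' (t₁ - s)| |f'' (t₁ - s)| := rfl
        have hy's : ‖y' s‖ = max |(-f'' (t₁ - s))| |(-f''' (t₁ - s))| := rfl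
        rw [hys, hy's, abs_neg, abs_neg, add_zero]
        have hm1 : |f' (t₁ - s)| ≤ max |f' (t₁ - s)| |f'' (t₁ - s)| := le_max_left _ _
        have hm2 : |f'' (t₁ - s)| ≤ max |f' (t₁ - s)| |f'' (t₁ - s)| := le_max_right _ _
        have hMnn : 0 ≤ max |f' (t₁ - s)| |f'' (t₁ - s)| :=
          le_trans (abs_nonneg _) hm1
        apply max_le
        · nlinarith
        · have hts0 : 0 ≤ t₁ - s := hsmem.1
          have hOD : f''' (t₁ - s) = m * (f' (t₁ - s)) ^ 2
              - (m + 1) / 2 * f (t₁ - s) * f'' (t₁ - s) := hODE _ hts0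
          have habs : |f''' (t₁ - s)| ≤ m * B * |f' (t₁ - s)|
              + (m + 1) / 2 * A * |f'' (t₁ - s)| := by
            rw [hOD]
            calc |m * (f' (t₁ - s)) ^ 2 - (m + 1) / 2 * f (t₁ - s) * f'' (t₁ - s)|
                ≤ |m * (f' (t₁ - s)) ^ 2| + |(m + 1) / 2 * f (t₁ - s) * f'' (t₁ - s)| :=
                  abs_sub _ _
              _ ≤ m * B * |f' (t₁ - s)| + (m + 1) / 2 * A * |f'' (t₁ - s)| := by
                  rw [abs_mul, abs_mul, abs_mul]
                  have e1 : |(f' (t₁ - s)) ^ 2| = |f' (t₁ - s)| * |f' (t₁ - s)| := by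
                    rw [sq, abs_mul]
                  have e2 : |m| = m := abs_of_pos hm
                  have e3 : |(m + 1) / 2| = (m + 1) / 2 := abs_of_pos (by linarith)
                  rw [e1, e2, e3]
                  have h4 : 0 ≤ |f' (t₁ - s)| := abs_nonneg _
                  have h5 : 0 ≤ |f'' (t₁ - s)| := abs_nonneg _
                  nlinarith [mul_le_mul_of_nonneg_right hBs h4,
                    mul_le_mul_of_nonneg_right hAs h5, hm.le]
          have hexp : K * (|f' (t₁ - s)| ⊔ |f'' (t₁ - s)|) =
              (|f' (t₁ - s)| ⊔ |f'' (t₁ - s)|) + m * B * (|f' (t₁ - s)| ⊔ |f'' (t₁ - s)|)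
              + (m + 1) / 2 * A * (|f' (t₁ - s)| ⊔ |f'' (t₁ - s)|) := by rw [hK]; ring
          have hint1 : m * B * |f' (t₁ - s)| ≤ m * B * (|f' (t₁ - s)| ⊔ |f'' (t₁ - s)|) :=
            mul_le_mul_of_nonneg_left hm1 (mul_nonneg hm.le hB0)
          have hint2 : (m + 1) / 2 * A * |f'' (t₁ - s)| ≤
              (m + 1) / 2 * A * (|f' (t₁ - s)| ⊔ |f'' (t₁ - s)|) :=
            mul_le_mul_of_nonneg_left hm2 (mul_nonneg (by linarith : (0:ℝ) ≤ (m+1)/2) hA0)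
          linarith
      have ha0 : ‖y 0‖ ≤ 0 := by
        have : y 0 = (0, 0) := by
          rw [hy]; simp only [sub_zero]; rw [hz, hd2]
        rw [this]; simp [Prod.norm_def]
      have := norm_le_gronwallBound_of_norm_deriv_right_le hcont
        (fun s hs => (hyd s ⟨hs.1, hs.2.le⟩).hasDerivWithinAt) ha0 hbound b
        ⟨hb0.le, le_refl _⟩
      rw [gronwallBound_ε0_δ0] at this
      have hub : t₁ - b = u := by rw [hbdef]; ring
      have hyb : y b = (f' u, f'' u) := by rw [hy]; simp only [hub]
      have h2 : |f' u| ≤ ‖y b‖ := by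
        rw [hyb, Prod.norm_def]
        simp only [Real.norm_eq_abs]
        exact le_max_left _ _
      have h3 : |f' u| = 0 := le_antisymm (le_trans h2 this) (abs_nonneg _)
      exact abs_eq_zero.mp h3
    have hmemIoo : Ioo (0:ℝ) t₁ ∈ 𝓝[>] (0:ℝ) :=
      Ioo_mem_nhdsGT_of_mem ⟨le_refl 0, ht₁pos⟩
    have hteq : Tendsto f' (𝓝[>] (0:ℝ)) (𝓝 0) := by
      refine Tendsto.congr' ?_ tendsto_const_nhds
      filter_upwards [hmemIoo] with x hx
      exact (key x hx).symm
    have htc : Tendsto f' (𝓝[>] (0:ℝ)) (𝓝 (f' 0)) :=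
      (hf'c 0 self_mem_Ici).tendsto.mono_left
        (nhdsWithin_mono 0 (Ioi_subset_Ici le_rfl))
    have hcontr := tendsto_nhds_unique htc hteq
    rw [h0] at hcontr
    norm_num at hcontr
  -- Step D : positivity of f'' is absorbing
  have habs2 : ∀ t₂ : ℝ, 0 < t₂ → 0 < f'' t₂ → ∀ r, t₂ ≤ r → 0 < f'' r := by
    intro t₂ ht₂ hpos2 r hr
    by_contra hle
    push_neg at hle
    set S : Set ℝ := {t ∈ Icc t₂ r | f'' t ≤ 0} with hS
    have hSne : S.Nonempty := ⟨r, ⟨⟨hr, le_refl r⟩, hle⟩⟩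
    have hScl : IsClosed S := by
      have hSeq : S = Icc t₂ r ∩ f'' ⁻¹' (Iic 0) := by
        ext x; simp [hS, mem_Icc, and_assoc]
      rw [hSeq]
      exact ContinuousOn.preimage_isClosed_of_isClosed
        (hf''c.mono (fun x hx => le_trans ht₂.le hx.1)) isClosed_Icc isClosed_Iic
    have hScomp : IsCompact S := isCompact_Icc.of_isClosed_subset hScl (fun x hx => hx.1)
    set z := sInf S with hzdef
    have hzS : z ∈ S := hScomp.sInf_mem hSne
    obtain ⟨⟨hz1, hz2⟩, hz3⟩ := hzS
    have hzpos : 0 < z := lt_of_lt_of_le ht₂ hz1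
    have htz : t₂ < z := by
      rcases hz1.lt_or_eq with h | h
      · exact h
      · exfalso; rw [← h] at hz3; linarith
    have hbefore : ∀ x, t₂ ≤ x → x < z → 0 < f'' x := by
      intro x hx1 hx2
      by_contra hcon; push_neg at hcon
      have hxS : x ∈ S := ⟨⟨hx1, le_trans hx2.le hz2⟩, hcon⟩
      have h5 : z ≤ x := by rw [hzdef]; exact csInf_le hScomp.bddBelow hxS
      linarith
    have hfz0 : f'' z = 0 := by
      refine le_antisymm hz3 ?_
      have hcz : ContinuousAt f'' z := (Hf'' hzpos).continuousAt
      have htt : Tendsto f'' (𝓝[<] z) (𝓝 (f'' z)) := hcz.tendsto.mono_left nhdsWithin_le_nhds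
      refine ge_of_tendsto htt ?_
      filter_upwards [Ioo_mem_nhdsLT_of_mem (⟨htz, le_refl z⟩ : z ∈ Ioc t₂ z)] with x hx
      exact (hbefore x hx.1.le hx.2).le
    have hdz : 0 < f''' z := by
      rw [hODE z hzpos.le, hfz0]
      have h1 : f' z < 0 := hneg' z hzpos.le
      nlinarith [mul_pos_of_neg_of_neg h1 h1]
    have hev := aux_slope_left (Hf'' hzpos) hdz
    rw [hfz0] at hev
    have hmem2 : Ioo t₂ z ∈ 𝓝[<] z := Ioo_mem_nhdsLT_of_mem ⟨htz, le_refl z⟩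
    obtain ⟨x, hx1, hx2⟩ := (hev.and (eventually_of_mem hmem2 (fun x hx => hx))).exists
    exact absurd (hbefore x hx2.1.le hx2.2) (by simp only [not_lt]; linarith)
  -- existence of points with positive f'' beyond any T
  have hex : ∀ T : ℝ, 0 < T → ∃ ξ, T < ξ ∧ 0 < f'' ξ := by
    intro T hT
    have hfT : f' T < 0 := hneg' T hT.le
    obtain ⟨S₀, hS₀⟩ := (hlim.eventually (Ioi_mem_nhds hfT)).exists_forall_of_atTop
    set S := max S₀ (T + 1) with hSdef
    have hTS : T < S := lt_of_lt_of_le (by linarith) (le_max_right _ _)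
    have hcont2 : ContinuousOn f' (Icc T S) := hf'c.mono (fun x hx => le_trans hT.le hx.1)
    obtain ⟨ξ, hξ, hslope⟩ := exists_hasDerivAt_eq_slope f' f'' hTS hcont2
      (fun x hx => Hf' (lt_trans hT hx.1))
    refine ⟨ξ, hξ.1, ?_⟩
    rw [hslope]
    have h1 : f' T < f' S := hS₀ S (le_max_left _ _)
    exact div_pos (by linarith) (by linarith)
  -- Step E : positivity of f
  have hanti : StrictAntiOn f (Ici 0) := by
    apply strictAntiOn_of_deriv_neg (convex_Ici 0) hfc
    intro x hx
    rw [interior_Ici] at hx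
    rw [(Hf hx).deriv]
    exact hneg' x (le_of_lt hx)
  have hpos : ∀ t : ℝ, 0 ≤ t → 0 < f t := by
    by_contra hcon; push_neg at hcon
    obtain ⟨τ, hτ0, hfτ⟩ := hcon
    obtain ⟨ξ, hξgt, hξpos⟩ := hex (τ + 1) (by linarith)
    have hξ0 : 0 < ξ := by linarith
    have hfξ : f ξ < 0 := by
      have h1 : f ξ < f τ := hanti (mem_Ici.mpr hτ0) (mem_Ici.mpr hξ0.le) (by linarith)
      linarith
    have hf2pos : ∀ t, ξ ≤ t → 0 < f'' t := fun t ht => habs2 ξ hξ0 hξpos t ht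
    have hf3pos : ∀ t, ξ ≤ t → 0 < f''' t := by
      intro t ht
      have ht0 : 0 < t := lt_of_lt_of_le hξ0 ht
      have h1 : f' t < 0 := hneg' t ht0.le
      have h2 : f t < 0 := by
        rcases ht.lt_or_eq with h | h
        · have := hanti (mem_Ici.mpr hξ0.le) (mem_Ici.mpr ht0.le) h
          linarith
        · rw [← h]; exact hfξ
      rw [hODE t ht0.le]
      nlinarith [mul_pos_of_neg_of_neg h1 h1, mul_neg_of_neg_of_pos h2 (hf2pos t ht),
        hf2pos t ht]
    have hmono2 : MonotoneOn f'' (Ici ξ) := by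
      apply monotoneOn_of_deriv_nonneg (convex_Ici ξ) (hf''c.mono (Ici_subset_Ici.mpr hξ0.le))
      · intro x hx
        rw [interior_Ici] at hx
        exact ((Hf'' (lt_trans hξ0 hx)).differentiableAt).differentiableWithinAt
      · intro x hx
        rw [interior_Ici] at hx
        rw [(Hf'' (lt_trans hξ0 hx)).deriv]
        exact (hf3pos x (le_of_lt hx)).le
    set ε := f'' ξ with hε
    have hεpos : 0 < ε := hξpos
    have hg : MonotoneOn (fun t => f' t - ε * t) (Ici ξ) := by
      apply monotoneOn_of_deriv_nonneg (convex_Ici ξ)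
      · exact (hf'c.mono (Ici_subset_Ici.mpr hξ0.le)).sub
          ((continuous_const.mul continuous_id).continuousOn)
      · intro x hx
        rw [interior_Ici] at hx
        exact (((Hf' (lt_trans hξ0 hx)).sub
          ((hasDerivAt_id x).const_mul ε)).differentiableAt).differentiableWithinAt
      · intro x hx
        rw [interior_Ici] at hx
        have hd : HasDerivAt (fun t => f' t - ε * t) (f'' x - ε * 1) x :=
          (Hf' (lt_trans hξ0 hx)).sub ((hasDerivAt_id x).const_mul ε)
        rw [hd.deriv]
        have h6 : f'' ξ ≤ f'' x := hmono2 self_mem_Ici (mem_Ici.mpr (le_of_lt hx)) (le_of_lt hx)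
        rw [← hε] at h6
        linarith
    have hf'ξ : f' ξ < 0 := hneg' ξ hξ0.le
    set t := ξ - f' ξ / ε + 1 with htdef
    have htξ : ξ ≤ t := by
      have h7 : f' ξ / ε < 0 := div_neg_of_neg_of_pos hf'ξ hεpos
      rw [htdef]; linarith
    have h8 := hg self_mem_Ici (mem_Ici.mpr htξ) htξ
    simp only at h8
    have hft : f' t < 0 := hneg' t (by linarith)
    have h9 : ε * (t - ξ) = -f' ξ + ε := by
      rw [htdef]; field_simp; ring
    nlinarith
  refine ⟨hpos, ?_, hpos 0 le_rfl⟩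
  apply antitoneOn_of_deriv_nonpos (convex_Ici 0) hfc
  · intro x hx
    rw [interior_Ici] at hx
    exact ((Hf hx).differentiableAt).differentiableWithinAt
  · intro x hx
    rw [interior_Ici] at hx
    rw [(Hf hx).deriv]
    exact (hneg' x (le_of_lt hx)).le
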